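/- For every monic polynomial R in F_q[T], the sum over monic irreducible divisors P of R of deg(P)/(|P| − 1) is O(log ω(R)), where ω(R) is the number of distinct monic irreducible factors of R; more precisely there is an absolute constant C with Σ_{P|R} deg(P)/(|P|−1) ≤ C·(1 + log(1 + ω(R))). -/
import Mathlib


open Polynomial UniqueFactorizationMonoid
open scoped Classical

noncomputable section

variable {Fq : Type} [Field Fq] [Fintype Fq]

/-- The norm `|f| = q ^ deg f` of a polynomial, as a real number. -/
def pnorm (f : Fq[X]) : ℝ := (Fintype.card Fq : ℝ) ^ f.natDegree

/-- The norm `|f| = q ^ deg f` of a polynomial, as a complex number. -/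
def pnormC (f : Fq[X]) : ℂ := (Fintype.card Fq : ℂ) ^ f.natDegree

/-- The Möbius function for polynomials over a finite field. -/
def polyMu (f : Fq[X]) : ℤ :=
  if Squarefree f then (-1) ^ (normalizedFactors f).toFinset.card else 0

/-- The number of distinct monic irreducible factors of `f`. -/
def omegaP (f : Fq[X]) : ℕ := (normalizedFactors f).toFinset.card

/-- The Euler totient of `f` : the number of units of `Fq[X]/(f)`. -/
def polyPhi (f : Fq[X]) : ℕ := Nat.card (Fq[X] ⧸ Ideal.span {f})ˣ

/-- Every irreducible polynomial of degree `d` over `F_q` divides `X^(q^d) - X`. -/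
lemma aux_dvd_X_pow_card_pow_sub_X {K : Type} [Field K] [Fintype K] {P : K[X]}
    (hP : Irreducible P) : P ∣ X ^ (Fintype.card K ^ P.natDegree) - X := by
  have hfact : Fact (Irreducible P) := ⟨hP⟩
  have hP0 : P ≠ 0 := hP.ne_zero
  let pb := AdjoinRoot.powerBasis hP0
  letI : Fintype (AdjoinRoot P) := Module.fintypeOfFintype pb.basis
  have hcard : Fintype.card (AdjoinRoot P) = Fintype.card K ^ P.natDegree := by
    rw [Module.card_eq_pow_finrank (K := K) (V := AdjoinRoot P), pb.finrank]
    rfl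
  have h := FiniteField.pow_card (AdjoinRoot.root P)
  rw [← AdjoinRoot.mk_eq_zero]
  rw [map_sub, map_pow, AdjoinRoot.mk_X, ← hcard, h, sub_self]

/-- The number of distinct monic irreducibles of degree `d` is at most `q^d / d`. -/
lemma aux_card_mul_deg_le {K : Type} [Field K] [Fintype K] {d : ℕ} (hd : 0 < d)
    {s : Finset K[X]} (hs : ∀ P ∈ s, Irreducible P ∧ P.Monic ∧ P.natDegree = d) :
    d * s.card ≤ Fintype.card K ^ d := by
  have hq : 1 < Fintype.card K := Fintype.one_lt_card
  have hdvd : ∏ P ∈ s, P ∣ X ^ (Fintype.card K ^ d) - X := by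
    refine Finset.prod_dvd_of_coprime ?_ ?_
    · intro a ha b hb hab
      exact ((hs a ha).1.coprime_iff_not_dvd).2 fun h => hab
        (eq_of_monic_of_associated (hs a ha).2.1 (hs b hb).2.1
          ((hs a ha).1.associated_of_dvd (hs b hb).1 h))
    · intro P hP
      have := aux_dvd_X_pow_card_pow_sub_X (hs P hP).1
      rwa [(hs P hP).2.2] at this
  have hne : (X ^ (Fintype.card K ^ d) - X : K[X]) ≠ 0 :=
    FiniteField.X_pow_card_pow_sub_X_ne_zero _ hd.ne' hq
  have h1 := Polynomial.natDegree_le_of_dvd hdvd hne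
  rw [Polynomial.natDegree_prod _ _ (fun P hP => (hs P hP).1.ne_zero),
    Finset.sum_congr rfl (fun P hP => (hs P hP).2.2), Finset.sum_const, smul_eq_mul,
    FiniteField.X_pow_card_pow_sub_X_natDegree_eq _ hd.ne' hq] at h1
  rw [mul_comm]; exact h1

lemma aux_add_le_mul_two_pow (m k : ℕ) (hm : 1 ≤ m) : m + k ≤ m * 2 ^ k := by
  induction k with
  | zero => simp
  | succ n ih =>
    have h2 : 1 ≤ m * 2 ^ n := Nat.one_le_iff_ne_zero.2 (by positivity)
    calc m + (n + 1) ≤ m * 2 ^ n + m * 2 ^ n := by omega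
      _ = m * 2 ^ (n + 1) := by ring

lemma aux_nat_ineq {D d : ℕ} (hD : 1 ≤ D) (hd : D ≤ d) :
    d * 2 ^ (D - 1) ≤ D * 2 ^ (d - 1) := by
  have h1 : d ≤ D * 2 ^ (d - D) := by
    calc d = D + (d - D) := by omega
      _ ≤ D * 2 ^ (d - D) := aux_add_le_mul_two_pow D (d - D) hD
  calc d * 2 ^ (D - 1) ≤ D * 2 ^ (d - D) * 2 ^ (D - 1) := Nat.mul_le_mul_right _ h1
    _ = D * 2 ^ (d - D + (D - 1)) := by rw [mul_assoc, pow_add]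
    _ = D * 2 ^ (d - 1) := by rw [show d - D + (D - 1) = d - 1 by omega]

lemma aux_term_le {q d D : ℕ} (hq : 2 ≤ q) (hD : 1 ≤ D) (hd : D ≤ d) :
    (d : ℝ) / ((q : ℝ) ^ d - 1) ≤ (D : ℝ) / (2 : ℝ) ^ (D - 1) := by
  have h2q : (2 : ℝ) ≤ (q : ℝ) := by exact_mod_cast hq
  have hd1 : 1 ≤ d := hD.trans hd
  have hp1 : (0 : ℝ) < (2 : ℝ) ^ (d - 1) := by positivity
  have hp2 : (0 : ℝ) < (2 : ℝ) ^ (D - 1) := by positivity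
  have hqd : (2 : ℝ) ^ (d - 1) ≤ (q : ℝ) ^ d - 1 := by
    have h1 : (2 : ℝ) ^ d ≤ (q : ℝ) ^ d := pow_le_pow_left₀ (by norm_num) h2q d
    have h2 : (2 : ℝ) ^ d = 2 * 2 ^ (d - 1) := by
      rw [← pow_succ']
      congr 1
      omega
    have h3 : (1 : ℝ) ≤ 2 ^ (d - 1) := one_le_pow₀ (by norm_num : (1:ℝ) ≤ 2)
    linarith
  have hden : (0 : ℝ) < (q : ℝ) ^ d - 1 := lt_of_lt_of_le hp1 hqd
  rw [div_le_div_iff₀ hden hp2]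
  calc (d : ℝ) * 2 ^ (D - 1) ≤ (D : ℝ) * 2 ^ (d - 1) := by
        exact_mod_cast aux_nat_ineq hD hd
    _ ≤ (D : ℝ) * ((q : ℝ) ^ d - 1) := by
        exact mul_le_mul_of_nonneg_left hqd (by positivity)

/-- `Σ_{P|R} deg(P)/(|P|-1) ≪ log ω(R)` with an absolute implied constant. -/
theorem sum_deg_div_norm_sub_one_le : ∃ C : ℝ, 0 < C ∧
    ∀ (K : Type) [Field K] [Fintype K] (R : K[X]), R.Monic →
      ∑ P ∈ (normalizedFactors R).toFinset, (P.natDegree : ℝ) / (pnorm P - 1)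
        ≤ C * (1 + Real.log (1 + omegaP R)) := by
  refine ⟨6, by norm_num, ?_⟩
  intro K _ _ R hR
  classical
  set q := Fintype.card K with hqdef
  have hq : 2 ≤ q := Fintype.one_lt_card
  set F := (normalizedFactors R).toFinset with hFdef
  have hfacts : ∀ P ∈ F, Irreducible P ∧ P.Monic ∧ 1 ≤ P.natDegree := by
    intro P hP
    have hmem := Multiset.mem_toFinset.mp hP
    have hirr : Irreducible P := irreducible_of_normalized_factor P hmem
    have hmon : P.Monic := by
      have := Polynomial.monic_normalize (p := P) hirr.ne_zero
      rwa [normalize_normalized_factor P hmem] at this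
    exact ⟨hirr, hmon, hirr.natDegree_pos⟩
  set ω := omegaP R with hωdef
  have hωF : F.card = ω := rfl
  set c := Nat.clog 2 (ω + 1) with hcdef
  set D := c + 1 with hDdef
  have hD1 : 1 ≤ D := Nat.le_add_left _ _
  have hpnorm : ∀ P : K[X], pnorm P = (q : ℝ) ^ P.natDegree := fun P => rfl
  -- the summand
  set g : K[X] → ℝ := fun P => (P.natDegree : ℝ) / (pnorm P - 1) with hgdef
  -- split the sum
  have hsplit := Finset.sum_filter_add_sum_filter_not F (fun P => P.natDegree < D) g
  -- small degree part
  have hsmall : ∑ P ∈ F.filter (fun P => P.natDegree < D), g P ≤ 2 * D := by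
    have hmaps : ∀ P ∈ F.filter (fun P => P.natDegree < D), P.natDegree ∈ Finset.range D :=
      fun P hP => Finset.mem_range.2 (Finset.mem_filter.1 hP).2
    rw [← Finset.sum_fiberwise_of_maps_to hmaps g]
    have hinner : ∀ d ∈ Finset.range D,
        ∑ P ∈ (F.filter (fun P => P.natDegree < D)).filter (fun P => P.natDegree = d), g P
          ≤ 2 := by
      intro d _
      set s := (F.filter (fun P => P.natDegree < D)).filter (fun P => P.natDegree = d) with hsdef
      have hmem : ∀ P ∈ s, P ∈ F ∧ P.natDegree = d := by
        intro P hP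
        have h1 := Finset.mem_filter.1 hP
        exact ⟨(Finset.mem_filter.1 h1.1).1, h1.2⟩
      by_cases hd0 : d = 0
      · have : ∀ P ∈ s, g P = 0 := by
          intro P hP
          simp [hgdef, (hmem P hP).2, hd0]
        rw [Finset.sum_eq_zero this]
        norm_num
      · have hd1 : 0 < d := Nat.pos_of_ne_zero hd0
        have hsub : ∀ P ∈ s, Irreducible P ∧ P.Monic ∧ P.natDegree = d := by
          intro P hP
          obtain ⟨h1, h2⟩ := hmem P hP
          exact ⟨(hfacts P h1).1, (hfacts P h1).2.1, h2⟩
        have hcard := aux_card_mul_deg_le hd1 hsub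
        have hsum : ∑ P ∈ s, g P = (s.card : ℝ) * ((d : ℝ) / ((q : ℝ) ^ d - 1)) := by
          rw [Finset.sum_congr rfl (fun P hP => ?_), Finset.sum_const, nsmul_eq_mul]
          simp [hgdef, hpnorm, (hsub P hP).2.2]
        have hqd : (2 : ℝ) ≤ (q : ℝ) ^ d := by
          calc (2 : ℝ) ≤ (q : ℝ) := by exact_mod_cast hq
            _ ≤ (q : ℝ) ^ d := le_self_pow₀ (by exact_mod_cast hq.trans' one_le_two) hd0
        have hden : (0 : ℝ) < (q : ℝ) ^ d - 1 := by linarith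
        rw [hsum]
        have h1 : (s.card : ℝ) * d ≤ (q : ℝ) ^ d := by
          have : (s.card * d : ℕ) ≤ q ^ d := by rw [mul_comm]; exact hcard
          exact_mod_cast this
        have h2 : (q : ℝ) ^ d ≤ 2 * ((q : ℝ) ^ d - 1) := by linarith
        calc (s.card : ℝ) * ((d : ℝ) / ((q : ℝ) ^ d - 1))
            = ((s.card : ℝ) * d) / ((q : ℝ) ^ d - 1) := by ring
          _ ≤ (2 * ((q : ℝ) ^ d - 1)) / ((q : ℝ) ^ d - 1) :=
              (div_le_div_iff_of_pos_right hden).2 (h1.trans h2)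
          _ = 2 := by field_simp
    calc _ ≤ ∑ _d ∈ Finset.range D, (2 : ℝ) := Finset.sum_le_sum hinner
      _ = 2 * D := by simp [mul_comm]
  -- large degree part
  have hbig : ∑ P ∈ F.filter (fun P => ¬ P.natDegree < D), g P ≤ (D : ℝ) := by
    have hterm : ∀ P ∈ F.filter (fun P => ¬ P.natDegree < D),
        g P ≤ (D : ℝ) / (2 : ℝ) ^ (D - 1) := by
      intro P hP
      obtain ⟨h1, h2⟩ := Finset.mem_filter.1 hP
      have hDd : D ≤ P.natDegree := Nat.le_of_not_lt h2
      have := aux_term_le hq hD1 hDd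
      simpa [hgdef, hpnorm] using this
    have hb := Finset.sum_le_card_nsmul _ g _ hterm
    have hcardle : (F.filter (fun P => ¬ P.natDegree < D)).card ≤ ω := by
      rw [← hωF]; exact Finset.card_filter_le _ _
    have hp2 : (0 : ℝ) < (2 : ℝ) ^ (D - 1) := by positivity
    have hω2 : (ω : ℝ) ≤ (2 : ℝ) ^ (D - 1) := by
      have : ω + 1 ≤ 2 ^ c := Nat.le_pow_clog one_lt_two _
      have hωc : (ω : ℕ) ≤ 2 ^ (D - 1) := by simpa [hDdef] using (Nat.le_of_succ_le this)
      exact_mod_cast hωc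
    calc ∑ P ∈ F.filter (fun P => ¬ P.natDegree < D), g P
        ≤ ((F.filter (fun P => ¬ P.natDegree < D)).card : ℝ) * ((D : ℝ) / (2 : ℝ) ^ (D - 1)) := by
          simpa [nsmul_eq_mul] using hb
      _ ≤ (ω : ℝ) * ((D : ℝ) / (2 : ℝ) ^ (D - 1)) := by
          apply mul_le_mul_of_nonneg_right (by exact_mod_cast hcardle)
          positivity
      _ = (D : ℝ) * ((ω : ℝ) / (2 : ℝ) ^ (D - 1)) := by ring
      _ ≤ (D : ℝ) * 1 := by
          apply mul_le_mul_of_nonneg_left _ (by positivity)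
          rw [div_le_one hp2]
          exact hω2
      _ = (D : ℝ) := mul_one _
  -- combine
  have htotal : ∑ P ∈ F, g P ≤ 3 * D := by
    rw [← hsplit]
    linarith
  -- final numeric bound
  have hlog0 : 0 ≤ Real.log (1 + (ω : ℝ)) :=
    Real.log_nonneg (le_add_of_nonneg_right (Nat.cast_nonneg ω))
  have hclog : (c : ℝ) ≤ 1 + 2 * Real.log (1 + (ω : ℝ)) := by
    by_cases hω0 : ω = 0
    · have hc0 : c = 0 := by rw [hcdef, hω0]; exact Nat.clog_one_right _
      rw [hc0, hω0]
      norm_num [Real.log_one]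
    · have hω1 : 2 ≤ ω + 1 := by omega
      have hc1 : 1 ≤ c := Nat.clog_pos one_lt_two hω1
      have hlt : 2 ^ (c - 1) < ω + 1 := Nat.pow_pred_clog_lt_self one_lt_two hω1
      have hle : (2 : ℕ) ^ (c - 1) ≤ ω := by omega
      have hle' : ((2 : ℝ)) ^ (c - 1) ≤ 1 + (ω : ℝ) := by
        have : ((2 : ℕ) ^ (c - 1) : ℝ) ≤ (ω : ℝ) := by exact_mod_cast hle
        push_cast at this ⊢
        linarith
      have hlog1 : ((c - 1 : ℕ) : ℝ) * Real.log 2 ≤ Real.log (1 + (ω : ℝ)) := by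
        rw [← Real.log_pow]
        exact Real.log_le_log (by positivity) hle'
      have hlog2 : (0.6931471803 : ℝ) < Real.log 2 := Real.log_two_gt_d9
      have hcast : ((c - 1 : ℕ) : ℝ) = (c : ℝ) - 1 := by
        rw [Nat.cast_sub hc1]; norm_num
      rw [hcast] at hlog1
      nlinarith [Real.log_nonneg (le_add_of_nonneg_right (Nat.cast_nonneg ω) : (1:ℝ) ≤ 1 + (ω:ℝ)),
        sub_nonneg.2 (show (1:ℝ) ≤ (c:ℝ) by exact_mod_cast hc1)]
  have hDreal : (D : ℝ) = (c : ℝ) + 1 := by push_cast [hDdef]; ring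
  calc ∑ P ∈ F, g P ≤ 3 * (D : ℝ) := htotal
    _ = 3 * ((c : ℝ) + 1) := by rw [hDreal]
    _ ≤ 3 * ((1 + 2 * Real.log (1 + (ω : ℝ))) + 1) := by
        have := hclog; linarith
    _ ≤ 6 * (1 + Real.log (1 + (ω : ℝ))) := by linarith
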